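/- Let λ > 1 be a natural number, f = E_λ, 0 < θ < 1, v ∈ C^{1+ε} with max|v| = M, max|v'| = M', and Γ the ε-Hölder constant of v'. Suppose c ∈ S¹ satisfies v'(c) > 0. Fix a natural N, 0 < δ₁, δ₂ ≤ 1 and h > 0 with δ₁ ≤ h λ^N ≤ δ₂, and assume dist(f^N(x), c) ≤ δ₂. Then h^{-θ} (λ^θ / δ₁^{1-θ}) |∑_{i=0}^{N} λ^{-θ(i+1)}(v(fⁱ(x+h)) − v(fⁱ(x)))| ≥ v'(c) − 2Γ δ₂^ε − 2M' / ((1 − λ^{θ-1}) λ^{1-θ}). -/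

import Mathlib

open Real

set_option maxHeartbeats 800000 in
/-- linear lower bound: for `f = E_b`, `v ∈ C^{1+ε}` 1-periodic with
`|v'| ≤ M'` and `v'` ε-Hölder with constant `Γ`, `v'(c) > 0`,
`δ₁ ≤ h b^N ≤ δ₂` and `|bᴺ x − c| ≤ δ₂` (circle distance realized on the line):
`h^{-θ} (b^θ / δ₁^{1-θ}) |∑_{i=0}^{N} b^{-θ(i+1)}(v(bⁱ(x+h)) − v(bⁱx))|
  ≥ v'(c) − 2Γ δ₂^ε − 2M'/((1 − b^{θ-1}) b^{1-θ})`. -/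
theorem stmt17 (b : ℕ) (hb : 1 < b) (θ ε : ℝ) (hθ0 : 0 < θ) (hθ1 : θ < 1)
    (hε0 : 0 < ε) (hε1 : ε ≤ 1)
    (v : ℝ → ℝ) (hv : ContDiff ℝ 1 v) (hvper : Function.Periodic v 1)
    (M M' Γ : ℝ) (hM : ∀ y, |v y| ≤ M) (hM' : ∀ y, |deriv v y| ≤ M')
    (hΓ : ∀ u w : ℝ, |deriv v u - deriv v w| ≤ Γ * |u - w| ^ ε)
    (c : ℝ) (hc : 0 < deriv v c)
    (N : ℕ) (δ₁ δ₂ h : ℝ) (hδ₁0 : 0 < δ₁) (hδ₁1 : δ₁ ≤ 1)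
    (hδ₂0 : 0 < δ₂) (hδ₂1 : δ₂ ≤ 1)
    (hh : 0 < h) (hhl : δ₁ ≤ h * (b : ℝ) ^ N) (hhu : h * (b : ℝ) ^ N ≤ δ₂)
    (x : ℝ) (hx : |(b : ℝ) ^ N * x - c| ≤ δ₂) :
    h ^ (-θ) * ((b : ℝ) ^ θ / δ₁ ^ (1 - θ)) *
      |∑ i ∈ Finset.range (N + 1),
          (b : ℝ) ^ (-(θ * ((i : ℝ) + 1))) *
            (v ((b : ℝ) ^ i * (x + h)) - v ((b : ℝ) ^ i * x))|
      ≥ deriv v c - 2 * Γ * δ₂ ^ ε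
        - 2 * M' / ((1 - (b : ℝ) ^ (θ - 1)) * (b : ℝ) ^ (1 - θ)) := by
  have hβ1 : (1:ℝ) < (b:ℝ) := by exact_mod_cast hb
  have hβ0 : (0:ℝ) < (b:ℝ) := lt_trans one_pos hβ1
  set β : ℝ := (b:ℝ) with hβdef
  have hM'0 : 0 ≤ M' := le_trans (abs_nonneg _) (hM' 0)
  have hΓ0 : 0 ≤ Γ := by
    have h1 := hΓ 1 0
    simp [Real.one_rpow] at h1
    exact le_trans (abs_nonneg _) h1
  have hdiff : Differentiable ℝ v := hv.differentiable one_ne_zero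
  -- mean value theorem on each interval
  have hMVT : ∀ i : ℕ, ∃ ξ ∈ Set.Ioo (β ^ i * x) (β ^ i * (x + h)),
      v (β ^ i * (x + h)) - v (β ^ i * x) = deriv v ξ * (β ^ i * h) := by
    intro i
    have hpow : 0 < β ^ i := pow_pos hβ0 i
    have hlt : β ^ i * x < β ^ i * (x + h) := by nlinarith
    obtain ⟨ξ, hξmem, hξeq⟩ := exists_hasDerivAt_eq_slope v (deriv v) hlt
      (hv.continuous.continuousOn) (fun z _ => (hdiff z).hasDerivAt)
    refine ⟨ξ, hξmem, ?_⟩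
    have hne : β ^ i * (x + h) - β ^ i * x ≠ 0 := by nlinarith
    have heq2 : v (β ^ i * (x + h)) - v (β ^ i * x)
        = deriv v ξ * (β ^ i * (x + h) - β ^ i * x) := by
      rw [hξeq, div_mul_cancel₀ _ hne]
    rw [heq2]; ring
  choose ξ hmem heq using hMVT
  -- abbreviations
  set r : ℝ := β ^ ((1:ℝ) - θ) with hrdef
  have hr1 : 1 < r := by
    rw [hrdef]
    exact (Real.one_lt_rpow_iff_of_pos hβ0).mpr (Or.inl ⟨hβ1, by linarith⟩)
  have hr0 : 0 < r := lt_trans one_pos hr1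
  have hrm1 : 0 < r - 1 := by linarith
  have hpowid : ∀ i : ℕ, β ^ (-(θ * ((i:ℝ) + 1))) * β ^ i = β ^ (-θ) * r ^ i := by
    intro i
    rw [hrdef, ← Real.rpow_natCast β i, ← Real.rpow_add hβ0,
      ← Real.rpow_natCast (β ^ ((1:ℝ) - θ)) i, ← Real.rpow_mul hβ0.le,
      ← Real.rpow_add hβ0]
    congr 1
    ring
  set S := ∑ i ∈ Finset.range (N + 1),
      β ^ (-(θ * ((i:ℝ) + 1))) * (v (β ^ i * (x + h)) - v (β ^ i * x)) with hS
  have hSrw : S = (∑ i ∈ Finset.range N, (β ^ (-θ) * r ^ i) * deriv v (ξ i) * h)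
      + (β ^ (-θ) * r ^ N) * deriv v (ξ N) * h := by
    rw [hS, Finset.sum_range_succ]
    congr 1
    · refine Finset.sum_congr rfl fun i _ => ?_
      rw [heq i, show β ^ (-(θ * ((i:ℝ) + 1))) * (deriv v (ξ i) * (β ^ i * h))
        = (β ^ (-(θ * ((i:ℝ) + 1))) * β ^ i) * deriv v (ξ i) * h from by ring,
        hpowid i]
    · rw [heq N, show β ^ (-(θ * ((N:ℝ) + 1))) * (deriv v (ξ N) * (β ^ N * h))
        = (β ^ (-(θ * ((N:ℝ) + 1))) * β ^ N) * deriv v (ξ N) * h from by ring,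
        hpowid N]
  -- bound on deriv v (ξ N)
  have hξN : |ξ N - c| ≤ 2 * δ₂ := by
    obtain ⟨h1, h2⟩ := hmem N
    have hp : 0 < β ^ N * h := by positivity
    have h3 : β ^ N * h ≤ δ₂ := by rw [mul_comm]; exact hhu
    rw [abs_le] at hx ⊢
    constructor <;> nlinarith [hx.1, hx.2]
  set A : ℝ := deriv v c - 2 * Γ * δ₂ ^ ε with hAdef
  have hA : A ≤ deriv v (ξ N) := by
    have h1 : |deriv v (ξ N) - deriv v c| ≤ Γ * |ξ N - c| ^ ε := hΓ _ _
    have h2 : |ξ N - c| ^ ε ≤ (2 * δ₂) ^ ε :=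
      Real.rpow_le_rpow (abs_nonneg _) hξN hε0.le
    have h3 : (2 * δ₂) ^ ε ≤ 2 * δ₂ ^ ε := by
      rw [Real.mul_rpow (by norm_num) hδ₂0.le]
      have h4 : (2:ℝ) ^ ε ≤ 2 ^ (1:ℝ) :=
        Real.rpow_le_rpow_of_exponent_le (by norm_num) hε1
      rw [Real.rpow_one] at h4
      have h5 := Real.rpow_pos_of_pos hδ₂0 ε
      nlinarith
    have h4 : Γ * |ξ N - c| ^ ε ≤ 2 * Γ * δ₂ ^ ε := by
      have h6 : Γ * |ξ N - c| ^ ε ≤ Γ * (2 * δ₂) ^ ε :=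
        mul_le_mul_of_nonneg_left h2 hΓ0
      have h7 : Γ * (2 * δ₂) ^ ε ≤ Γ * (2 * δ₂ ^ ε) :=
        mul_le_mul_of_nonneg_left h3 hΓ0
      linarith
    have h5 := abs_le.mp (le_trans h1 h4)
    rw [hAdef]
    linarith [h5.1]
  -- geometric sum bound
  have hgeom : ∑ i ∈ Finset.range N, r ^ i ≤ r ^ N / (r - 1) := by
    rw [geom_sum_eq (ne_of_gt hr1), div_le_div_iff₀ hrm1 hrm1]
    nlinarith [pow_pos hr0 N]
  -- lower bound for S
  have hβθ : 0 < β ^ (-θ) := Real.rpow_pos_of_pos hβ0 _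
  have hrN : (0:ℝ) < r ^ N := pow_pos hr0 N
  have hSlow : β ^ (-θ) * h * r ^ N * (A - M' / (r - 1)) ≤ S := by
    rw [hSrw]
    have hlast : (β ^ (-θ) * r ^ N) * A * h ≤ (β ^ (-θ) * r ^ N) * deriv v (ξ N) * h :=
      mul_le_mul_of_nonneg_right
        (mul_le_mul_of_nonneg_left hA (by positivity)) hh.le
    have hb1 : ∀ i ∈ Finset.range N,
        -((β ^ (-θ) * M' * h) * r ^ i) ≤ (β ^ (-θ) * r ^ i) * deriv v (ξ i) * h := by
      intro i _
      have h6 := (abs_le.mp (hM' (ξ i))).1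
      have hri : (0:ℝ) < r ^ i := pow_pos hr0 i
      have h7 : (β ^ (-θ) * r ^ i) * (-M') * h ≤ (β ^ (-θ) * r ^ i) * deriv v (ξ i) * h :=
        mul_le_mul_of_nonneg_right
          (mul_le_mul_of_nonneg_left h6 (by positivity)) hh.le
      nlinarith [h7]
    have hsum1 : -((β ^ (-θ) * M' * h) * ∑ i ∈ Finset.range N, r ^ i)
        ≤ ∑ i ∈ Finset.range N, (β ^ (-θ) * r ^ i) * deriv v (ξ i) * h := by
      rw [Finset.mul_sum, ← Finset.sum_neg_distrib]
      exact Finset.sum_le_sum hb1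
    have hCnn : 0 ≤ β ^ (-θ) * M' * h := by positivity
    have hsum2 : -((β ^ (-θ) * M' * h) * (r ^ N / (r - 1)))
        ≤ -((β ^ (-θ) * M' * h) * ∑ i ∈ Finset.range N, r ^ i) := by
      nlinarith [mul_nonneg hCnn (sub_nonneg.mpr hgeom)]
    have hkey : β ^ (-θ) * h * r ^ N * (A - M' / (r - 1))
        = -((β ^ (-θ) * M' * h) * (r ^ N / (r - 1))) + (β ^ (-θ) * r ^ N) * A * h := by
      field_simp
      ring
    rw [hkey]
    exact add_le_add (le_trans hsum2 hsum1) hlast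
  -- identity for the denominator
  have hD : (1 - β ^ (θ - 1)) * r = r - 1 := by
    rw [hrdef, sub_mul, one_mul, ← Real.rpow_add hβ0,
      show θ - 1 + ((1:ℝ) - θ) = 0 by ring, Real.rpow_zero]
  rw [ge_iff_le, hD]
  rcases le_or_gt (A - 2 * M' / (r - 1)) 0 with hcase | hcase
  · exact le_trans hcase (by positivity)
  · have hK'ge : A - 2 * M' / (r - 1) ≤ A - M' / (r - 1) := by
      have hinv : (0:ℝ) < (r - 1)⁻¹ := by positivity
      rw [div_eq_mul_inv, div_eq_mul_inv]
      nlinarith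
    have hK'pos : 0 < A - M' / (r - 1) := lt_of_lt_of_le hcase hK'ge
    have hSpos : 0 < S :=
      lt_of_lt_of_le (by positivity) hSlow
    rw [abs_of_pos hSpos]
    have hpow1 : h ^ (-θ) * h = h ^ ((1:ℝ) - θ) := by
      rw [show (1:ℝ) - θ = -θ + 1 by ring, Real.rpow_add hh, Real.rpow_one]
    have hpow2 : β ^ θ * β ^ (-θ) = 1 := by
      rw [← Real.rpow_add hβ0, show θ + -θ = 0 by ring, Real.rpow_zero]
    have hpow3 : h ^ ((1:ℝ) - θ) * r ^ N = (h * β ^ N) ^ ((1:ℝ) - θ) := by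
      rw [Real.mul_rpow hh.le (pow_nonneg hβ0.le N), hrdef,
        ← Real.rpow_natCast β N, ← Real.rpow_mul hβ0.le,
        ← Real.rpow_natCast (β ^ ((1:ℝ) - θ)) N, ← Real.rpow_mul hβ0.le]
      congr 1
      ring
    have hδ₁p : 0 < δ₁ ^ ((1:ℝ) - θ) := Real.rpow_pos_of_pos hδ₁0 _
    have hge1 : δ₁ ^ ((1:ℝ) - θ) ≤ (h * β ^ N) ^ ((1:ℝ) - θ) :=
      Real.rpow_le_rpow hδ₁0.le hhl (by linarith)
    have hone : 1 ≤ h ^ ((1:ℝ) - θ) * r ^ N / δ₁ ^ ((1:ℝ) - θ) := by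
      rw [le_div_iff₀ hδ₁p, one_mul, hpow3]
      exact hge1
    calc A - 2 * M' / (r - 1) ≤ A - M' / (r - 1) := hK'ge
      _ ≤ (h ^ ((1:ℝ) - θ) * r ^ N / δ₁ ^ ((1:ℝ) - θ)) * (A - M' / (r - 1)) := by
          nlinarith
      _ = (h ^ (-θ) * (β ^ θ / δ₁ ^ ((1:ℝ) - θ))) *
            (β ^ (-θ) * h * r ^ N * (A - M' / (r - 1))) := by
          rw [show (h ^ (-θ) * (β ^ θ / δ₁ ^ ((1:ℝ) - θ))) *
              (β ^ (-θ) * h * r ^ N * (A - M' / (r - 1)))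
            = ((h ^ (-θ) * h) * (β ^ θ * β ^ (-θ)) * r ^ N / δ₁ ^ ((1:ℝ) - θ))
                * (A - M' / (r - 1)) from by ring, hpow1, hpow2, mul_one]
      _ ≤ (h ^ (-θ) * (β ^ θ / δ₁ ^ ((1:ℝ) - θ))) * S := by
          have hP : 0 < h ^ (-θ) * (β ^ θ / δ₁ ^ ((1:ℝ) - θ)) := by positivity
          exact mul_le_mul_of_nonneg_left hSlow hP.le
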